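/- Let ℓ, m ≥ 2 and let K ⊆ ℤ^ℓ and L ⊆ ℤ^m be finite lattice-convex sets, neither of which is centrally symmetric. Then K × L and K × (−L) are finite lattice-convex subsets of ℤ^{ℓ+m} forming a nontrivially homometric pair: g_{K×L} = g_{K×(−L)} and [K×L] ≠ [K×(−L)]. -/

import Mathlib

open scoped Pointwise

noncomputable section

/-- The covariogram of a finite `K ⊆ ℤ^d`: `u ↦ |K ∩ (K + u)|`. -/
def covG {d : ℕ} (K : Set (Fin d → ℤ)) (u : Fin d → ℤ) : ℕ :=
  (K ∩ ((fun x => x + u) '' K)).ncard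

/-- `L ∈ [K]`: `L` is a translate of `K` or a translate of `−K`. -/
def sameClassG {d : ℕ} (K L : Set (Fin d → ℤ)) : Prop :=
  ∃ t : Fin d → ℤ, L = (fun x => x + t) '' K ∨ L = (fun x => t - x) '' K

/-- `A ⊆ ℤ^d` is centrally symmetric if `A = −A + t` for some `t`. -/
def centSymG {d : ℕ} (A : Set (Fin d → ℤ)) : Prop :=
  ∃ t : Fin d → ℤ, A = (fun x => t - x) '' A

/-- `K ⊆ ℤ^d` is lattice-convex if it is the intersection of `ℤ^d` with a convex
subset of `ℝ^d`. -/
def latticeConvexG {d : ℕ} (K : Set (Fin d → ℤ)) : Prop :=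
  ∃ C : Set (Fin d → ℝ), Convex ℝ C ∧
    K = (fun (x : Fin d → ℤ) (i : Fin d) => (x i : ℝ)) ⁻¹' C

/-- The Cartesian product `K × L ⊆ ℤ^(l+m)` of `K ⊆ ℤ^l` and `L ⊆ ℤ^m`. -/
def prodSet {l m : ℕ} (K : Set (Fin l → ℤ)) (L : Set (Fin m → ℤ)) :
    Set (Fin (l + m) → ℤ) :=
  {z | (fun i => z (Fin.castAdd m i)) ∈ K ∧ (fun j => z (Fin.natAdd l j)) ∈ L}

namespace ProdHomAux

/-- the splitting equivalence -/
def sp (l m : ℕ) : (Fin (l + m) → ℤ) ≃ ((Fin l → ℤ) × (Fin m → ℤ)) where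
  toFun z := (fun i => z (Fin.castAdd m i), fun j => z (Fin.natAdd l j))
  invFun p := Fin.append p.1 p.2
  left_inv z := by
    funext k
    cases k using Fin.addCases with
    | left i => simp [Fin.append_left]
    | right j => simp [Fin.append_right]
  right_inv p := by
    refine Prod.ext ?_ ?_
    · funext i; simp [Fin.append_left]
    · funext j; simp [Fin.append_right]

variable {l m : ℕ}

lemma sp_add (z u : Fin (l + m) → ℤ) : sp l m (z + u) = sp l m z + sp l m u := rfl

lemma sp_sub (z u : Fin (l + m) → ℤ) : sp l m (z - u) = sp l m z - sp l m u := rfl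

lemma prodSet_eq (K : Set (Fin l → ℤ)) (L : Set (Fin m → ℤ)) :
    prodSet K L = sp l m ⁻¹' (K ×ˢ L) := rfl

lemma image_add_preimage (S : Set ((Fin l → ℤ) × (Fin m → ℤ))) (u : Fin (l + m) → ℤ) :
    (fun x => x + u) '' ((sp l m) ⁻¹' S) = (sp l m) ⁻¹' ((fun p => p + sp l m u) '' S) := by
  ext z
  simp only [Set.mem_image, Set.mem_preimage]
  constructor
  · rintro ⟨w, hw, rfl⟩
    exact ⟨sp l m w, hw, (sp_add w u).symm⟩
  · rintro ⟨p, hp, hpz⟩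
    refine ⟨(sp l m).symm p, by simpa using hp, ?_⟩
    apply (sp l m).injective
    rw [sp_add]
    simp [hpz]

lemma image_sub_preimage (S : Set ((Fin l → ℤ) × (Fin m → ℤ))) (t : Fin (l + m) → ℤ) :
    (fun x => t - x) '' ((sp l m) ⁻¹' S) = (sp l m) ⁻¹' ((fun p => sp l m t - p) '' S) := by
  ext z
  simp only [Set.mem_image, Set.mem_preimage]
  constructor
  · rintro ⟨w, hw, rfl⟩
    exact ⟨sp l m w, hw, (sp_sub t w).symm⟩
  · rintro ⟨p, hp, hpz⟩
    refine ⟨(sp l m).symm p, by simpa using hp, ?_⟩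
    apply (sp l m).injective
    rw [sp_sub]
    simp [hpz]

lemma ncard_preimage (S : Set ((Fin l → ℤ) × (Fin m → ℤ))) :
    ((sp l m) ⁻¹' S).ncard = S.ncard := by
  have h : (sp l m) ⁻¹' S = (sp l m).symm '' S := by
    rw [Equiv.image_eq_preimage_symm]; simp
  rw [h, Set.ncard_image_of_injective _ (sp l m).symm.injective]

lemma ncard_prod {α β : Type*} (s : Set α) (t : Set β) :
    (s ×ˢ t).ncard = s.ncard * t.ncard := by
  rw [← Nat.card_coe_set_eq, ← Nat.card_coe_set_eq, ← Nat.card_coe_set_eq,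
    ← Nat.card_prod]
  exact Nat.card_congr (Equiv.Set.prod s t)

variable {d : ℕ}

lemma inter_image_add (A : Set (Fin d → ℤ)) (u : Fin d → ℤ) :
    A ∩ ((fun x => x + u) '' A) = {x | x ∈ A ∧ x - u ∈ A} := by
  ext x
  simp only [Set.mem_inter_iff, Set.mem_image, Set.mem_setOf_eq]
  constructor
  · rintro ⟨hx, y, hy, rfl⟩
    exact ⟨hx, by simpa using hy⟩
  · rintro ⟨hx, hx'⟩
    exact ⟨hx, x - u, hx', by abel⟩

lemma covG_eq (A : Set (Fin d → ℤ)) (u : Fin d → ℤ) :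
    covG A u = {x | x ∈ A ∧ x - u ∈ A}.ncard := by
  rw [covG, inter_image_add]

lemma covG_neg_arg (A : Set (Fin d → ℤ)) (u : Fin d → ℤ) : covG A (-u) = covG A u := by
  rw [covG_eq, covG_eq]
  have h : {x | x ∈ A ∧ x - u ∈ A} = (fun x => x + u) '' {x | x ∈ A ∧ x - (-u) ∈ A} := by
    ext x
    simp only [Set.mem_setOf_eq, Set.mem_image, sub_neg_eq_add]
    constructor
    · rintro ⟨hx, hx'⟩
      exact ⟨x - u, ⟨hx', by simpa using hx⟩, by abel⟩
    · rintro ⟨y, ⟨hy, hy'⟩, rfl⟩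
      exact ⟨hy', by simpa using hy⟩
  rw [h, Set.ncard_image_of_injective _ (add_left_injective u)]

lemma covG_neg_set (A : Set (Fin d → ℤ)) (u : Fin d → ℤ) : covG (-A) u = covG A u := by
  rw [← covG_neg_arg A u, covG_eq, covG_eq]
  have h : {x | x ∈ -A ∧ x - u ∈ -A} = (fun x => -x) '' {x | x ∈ A ∧ x - -u ∈ A} := by
    ext x
    simp only [Set.mem_setOf_eq, Set.mem_image, Set.mem_neg, sub_neg_eq_add]
    constructor
    · rintro ⟨hx, hx'⟩
      refine ⟨-x, ⟨hx, ?_⟩, by simp⟩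
      rwa [show -x + u = -(x - u) from by abel]
    · rintro ⟨y, ⟨hy, hy'⟩, rfl⟩
      refine ⟨by simpa using hy, ?_⟩
      rwa [show -(-y - u) = y + u from by abel]
  rw [h, Set.ncard_image_of_injective _ neg_injective]

lemma prod_image_add (K : Set (Fin l → ℤ)) (L : Set (Fin m → ℤ)) (v : (Fin l → ℤ) × (Fin m → ℤ)) :
    (fun p => p + v) '' (K ×ˢ L)
      = ((fun x => x + v.1) '' K) ×ˢ ((fun x => x + v.2) '' L) := by
  rw [Set.prod_image_image_eq]; rfl

lemma prod_image_sub (K : Set (Fin l → ℤ)) (L : Set (Fin m → ℤ)) (v : (Fin l → ℤ) × (Fin m → ℤ)) :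
    (fun p => v - p) '' (K ×ˢ L)
      = ((fun x => v.1 - x) '' K) ×ˢ ((fun x => v.2 - x) '' L) := by
  rw [Set.prod_image_image_eq]; rfl

lemma covG_prod (K : Set (Fin l → ℤ)) (L : Set (Fin m → ℤ)) (u : Fin (l + m) → ℤ) :
    covG (prodSet K L) u =
      covG K (fun i => u (Fin.castAdd m i)) * covG L (fun j => u (Fin.natAdd l j)) := by
  unfold covG
  rw [prodSet_eq, image_add_preimage, ← Set.preimage_inter, ncard_preimage,
    prod_image_add, Set.prod_inter_prod, ncard_prod]
  rfl

lemma nonempty_of_not_centSym {A : Set (Fin d → ℤ)} (h : ¬ centSymG A) : A.Nonempty := by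
  rcases A.eq_empty_or_nonempty with rfl | h'
  · exact absurd ⟨0, by simp⟩ h
  · exact h'

end ProdHomAux

open ProdHomAux


/-- for `ℓ, m ≥ 2` and finite lattice-convex `K ⊆ ℤ^ℓ`, `L ⊆ ℤ^m`,
neither centrally symmetric, the sets `K × L` and `K × (−L)` are finite
lattice-convex subsets of `ℤ^(ℓ+m)` forming a nontrivially homometric pair. -/
theorem product_homometric_pair
    (l m : ℕ) (hl : 2 ≤ l) (hm : 2 ≤ m)
    (K : Set (Fin l → ℤ)) (L : Set (Fin m → ℤ))
    (hKfin : K.Finite) (hLfin : L.Finite)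
    (hKconv : latticeConvexG K) (hLconv : latticeConvexG L)
    (hKsym : ¬ centSymG K) (hLsym : ¬ centSymG L) :
    (prodSet K L).Finite ∧ (prodSet K (-L)).Finite ∧
      latticeConvexG (prodSet K L) ∧ latticeConvexG (prodSet K (-L)) ∧
      covG (prodSet K L) = covG (prodSet K (-L)) ∧
      ¬ sameClassG (prodSet K L) (prodSet K (-L)) := by
  have hKne : K.Nonempty := nonempty_of_not_centSym hKsym
  have hLne : L.Nonempty := nonempty_of_not_centSym hLsym
  -- finiteness
  have fin : ∀ L' : Set (Fin m → ℤ), L'.Finite → (prodSet K L').Finite := by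
    intro L' hL'
    rw [prodSet_eq]
    exact Set.Finite.preimage (Function.Injective.injOn (sp l m).injective) (hKfin.prod hL')
  -- lattice convexity
  have conv : ∀ L' : Set (Fin m → ℤ), latticeConvexG L' → latticeConvexG (prodSet K L') := by
    intro L' hL'
    obtain ⟨C, hC, hCK⟩ := hKconv
    obtain ⟨D, hD, hDL⟩ := hL'
    refine ⟨{w | (fun i => w (Fin.castAdd m i)) ∈ C ∧ (fun j => w (Fin.natAdd l j)) ∈ D}, ?_, ?_⟩
    · rintro w1 ⟨h11, h12⟩ w2 ⟨h21, h22⟩ a b ha hb hab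
      constructor
      · have := hC h11 h21 ha hb hab
        convert this using 1
        rfl
      · have := hD h12 h22 ha hb hab
        convert this using 1
        rfl
    · ext z
      simp only [prodSet, Set.mem_setOf_eq, Set.mem_preimage, hCK, hDL]
  have hnegLconv : latticeConvexG (-L) := by
    obtain ⟨D, hD, hDL⟩ := hLconv
    refine ⟨-D, hD.neg, ?_⟩
    ext y
    simp only [Set.mem_neg, Set.mem_preimage, hDL]
    rw [show (-fun i => (y i : ℝ)) = (fun i => (((-y) i : ℤ) : ℝ)) from funext fun i => by
      simp]
  refine ⟨fin L hLfin, fin (-L) (hLfin.neg), conv L hLconv, conv (-L) hnegLconv, ?_, ?_⟩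
  · funext u
    rw [covG_prod, covG_prod, covG_neg_set]
  · rintro ⟨t, ht | ht⟩
    · -- translate case: contradicts central asymmetry of L
      rw [prodSet_eq, prodSet_eq, image_add_preimage, prod_image_add] at ht
      have h2 := (sp l m).surjective.preimage_injective ht
      rw [Set.prod_eq_prod_iff] at h2
      rcases h2 with ⟨_, h2⟩ | ⟨h2, _⟩
      · apply hLsym
        refine ⟨-(sp l m t).2, ?_⟩
        ext y
        constructor
        · intro hy
          have hny : -y ∈ -L := by simpa using hy
          rw [h2] at hny
          obtain ⟨x, hx, hxy⟩ := hny
          refine ⟨x, hx, ?_⟩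
          show -(sp l m t).2 - x = y
          have hy2 : -(x + (sp l m t).2) = y := by
            rw [show x + (sp l m t).2 = -y from hxy, neg_neg]
          rw [← hy2]; abel
        · rintro ⟨x, hx, rfl⟩
          have h3 : x + (sp l m t).2 ∈ -L := by rw [h2]; exact ⟨x, hx, rfl⟩
          rw [Set.mem_neg] at h3
          show -(sp l m t).2 - x ∈ L
          rwa [show -(sp l m t).2 - x = -(x + (sp l m t).2) from by abel]
      · rcases h2 with h2 | h2
        · exact hKne.ne_empty h2
        · exact (hLne.neg).ne_empty h2
    · -- reflection case: contradicts central asymmetry of K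
      rw [prodSet_eq, prodSet_eq, image_sub_preimage, prod_image_sub] at ht
      have h2 := (sp l m).surjective.preimage_injective ht
      rw [Set.prod_eq_prod_iff] at h2
      rcases h2 with ⟨h2, _⟩ | ⟨h2, _⟩
      · exact hKsym ⟨(sp l m t).1, h2⟩
      · rcases h2 with h2 | h2
        · exact hKne.ne_empty h2
        · exact (hLne.neg).ne_empty h2

end
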